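/- Let (X, d) be a metric space equipped with its Borel σ-algebra, let μ_1, …, μ_m and μ_v be Borel probability measures on X, and let α_1, …, α_m ≥ 0 satisfy Σ_{i=1}^m α_i = 1. Let f_v, f_t^1, …, f_t^m, h, h* : X → ℝ be Borel measurable, let k ≥ 0, and let L : ℝ × ℝ → ℝ be symmetric (L(u, w) = L(w, u)) and k-Lipschitz in its first argument. Assume the map x ↦ L(h(x), h*(x)) is 1-Lipschitz on (X, d), and assume all integrals appearing below are finite. Then for every coupling π of the mixture measure Σ_{i=1}^m α_i μ_i and μ_v: |∫_X L(f_v(x), h(x)) dμ_v(x) − Σ_{i=1}^m α_i ∫_X L(f_t^i(x), h(x)) dμ_i(x)| ≤ ∫_{X×X} d(x, y) dπ(x, y) + k·(∫_X |f_v(x) − h*(x)| dμ_v(x) + Σ_{i=1}^m α_i ∫_X |f_t^i(x) − h*(x)| dμ_i(x)). (Taking the infimum over couplings yields the paper's Theorem 1: the federated validation–training gap is bounded by the 1-Wasserstein distance between the mixture of training distributions and the validation distribution, plus the labeling-discrepancy terms.) -/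

import Mathlib

open MeasureTheory

private lemma abs_integral_le_integral_abs' {Y : Type*} [MeasurableSpace Y]
    (ν : Measure Y) (f : Y → ℝ) : |∫ y, f y ∂ν| ≤ ∫ y, |f y| ∂ν :=
  norm_integral_le_integral_norm f

/-- Theorem 1 of the paper, coupling form: Let `(X, d)` be a metric space with
Borel σ-algebra, `μ_1, …, μ_m, μ_v` Borel probability measures, `α_i ≥ 0` with `Σ α_i = 1`.
Let `f_v, f_t^i, h, h⋆ : X → ℝ` be Borel measurable, `k ≥ 0`, `L : ℝ × ℝ → ℝ` symmetric and
`k`-Lipschitz in its first argument, and assume `x ↦ L(h(x), h⋆(x))` is `1`-Lipschitz on `(X, d)`.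
Assuming all integrals appearing below are finite, for every coupling `π` of `Σ_i α_i μ_i`
and `μ_v`:
`|∫ L(f_v, h) dμ_v − Σ_i α_i ∫ L(f_t^i, h) dμ_i|
  ≤ ∫ d(x,y) dπ + k·(∫ |f_v − h⋆| dμ_v + Σ_i α_i ∫ |f_t^i − h⋆| dμ_i)`. -/
theorem federated_generalization_bound
    {X : Type*} [MetricSpace X] [MeasurableSpace X] [BorelSpace X] {m : ℕ}
    (μ : Fin m → Measure X) (μv : Measure X)
    [∀ i, IsProbabilityMeasure (μ i)] [IsProbabilityMeasure μv]
    (α : Fin m → ℝ) (hα : ∀ i, 0 ≤ α i) (hαsum : ∑ i, α i = 1)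
    (fv : X → ℝ) (ft : Fin m → X → ℝ) (h hstar : X → ℝ)
    (hfv : Measurable fv) (hft : ∀ i, Measurable (ft i))
    (hh : Measurable h) (hhstar : Measurable hstar)
    (k : ℝ) (hk : 0 ≤ k) (L : ℝ → ℝ → ℝ)
    (hLsymm : ∀ a b : ℝ, L a b = L b a)
    (hLlip : ∀ a a' b : ℝ, |L a b - L a' b| ≤ k * |a - a'|)
    (hLip1 : ∀ x y : X, |L (h x) (hstar x) - L (h y) (hstar y)| ≤ dist x y)
    (hint_v : Integrable (fun x => L (fv x) (h x)) μv)
    (hint_t : ∀ i, Integrable (fun x => L (ft i x) (h x)) (μ i))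
    (hint_dv : Integrable (fun x => |fv x - hstar x|) μv)
    (hint_dt : ∀ i, Integrable (fun x => |ft i x - hstar x|) (μ i))
    (π : Measure (X × X)) [IsProbabilityMeasure π]
    (hπ1 : π.map Prod.fst = ∑ i, ENNReal.ofReal (α i) • μ i)
    (hπ2 : π.map Prod.snd = μv)
    (hπint : Integrable (fun p : X × X => dist p.1 p.2) π) :
    |(∫ x, L (fv x) (h x) ∂μv) - ∑ i, α i * ∫ x, L (ft i x) (h x) ∂(μ i)|
      ≤ (∫ p : X × X, dist p.1 p.2 ∂π)
        + k * ((∫ x, |fv x - hstar x| ∂μv)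
            + ∑ i, α i * ∫ x, |ft i x - hstar x| ∂(μ i)) := by
  classical
  set g : X → ℝ := fun x => L (h x) (hstar x) with hgdef
  have hglip : LipschitzWith 1 g := by
    apply LipschitzWith.of_dist_le_mul
    intro x y
    rw [Real.dist_eq]
    simpa using hLip1 x y
  have hgmeas : Measurable g := hglip.continuous.measurable
  have hbv : ∀ x, |L (fv x) (h x) - g x| ≤ k * |fv x - hstar x| := by
    intro x
    have hgx : g x = L (hstar x) (h x) := hLsymm _ _
    rw [hgx]
    exact hLlip (fv x) (hstar x) (h x)
  have hbt : ∀ i x, |L (ft i x) (h x) - g x| ≤ k * |ft i x - hstar x| := by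
    intro i x
    have hgx : g x = L (hstar x) (h x) := hLsymm _ _
    rw [hgx]
    exact hLlip (ft i x) (hstar x) (h x)
  -- integrability of g
  have hg_v : Integrable g μv := by
    refine (hint_v.abs.add (hint_dv.const_mul k)).mono' hgmeas.aestronglyMeasurable ?_
    filter_upwards with x
    have h1 := hbv x
    have h2 := abs_sub_abs_le_abs_sub (g x) (L (fv x) (h x))
    have h3 : |g x - L (fv x) (h x)| = |L (fv x) (h x) - g x| := abs_sub_comm _ _
    have : ‖g x‖ = |g x| := rfl
    simp only [Pi.add_apply]
    rw [this]
    linarith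
  have hg_t : ∀ i, Integrable g (μ i) := by
    intro i
    refine ((hint_t i).abs.add ((hint_dt i).const_mul k)).mono' hgmeas.aestronglyMeasurable ?_
    filter_upwards with x
    have h1 := hbt i x
    have h2 := abs_sub_abs_le_abs_sub (g x) (L (ft i x) (h x))
    have h3 : |g x - L (ft i x) (h x)| = |L (ft i x) (h x) - g x| := abs_sub_comm _ _
    have : ‖g x‖ = |g x| := rfl
    simp only [Pi.add_apply]
    rw [this]
    linarith
  have hg_smul : ∀ i, Integrable g (ENNReal.ofReal (α i) • μ i) := fun i =>
    (hg_t i).smul_measure ENNReal.ofReal_ne_top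
  have hg_mix : Integrable g (∑ i, ENNReal.ofReal (α i) • μ i) :=
    integrable_finset_sum_measure.2 fun i _ => hg_smul i
  -- integral over mixture
  have hmix_int : (∫ x, g x ∂(∑ i, ENNReal.ofReal (α i) • μ i))
      = ∑ i, α i * ∫ x, g x ∂(μ i) := by
    rw [integral_finset_sum_measure fun i _ => hg_smul i]
    refine Finset.sum_congr rfl fun i _ => ?_
    rw [integral_smul_measure, ENNReal.toReal_ofReal (hα i), smul_eq_mul]
  -- transfer to π
  have hgfst : Integrable (fun p : X × X => g p.1) π := by
    have := (integrable_map_measure hgmeas.aestronglyMeasurable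
      measurable_fst.aemeasurable (μ := π)).mp (hπ1 ▸ hg_mix)
    exact this
  have hgsnd : Integrable (fun p : X × X => g p.2) π := by
    have := (integrable_map_measure hgmeas.aestronglyMeasurable
      measurable_snd.aemeasurable (μ := π)).mp (hπ2 ▸ hg_v)
    exact this
  have hifst : (∫ p : X × X, g p.1 ∂π) = ∑ i, α i * ∫ x, g x ∂(μ i) := by
    rw [← hmix_int, ← hπ1,
      integral_map measurable_fst.aemeasurable hgmeas.aestronglyMeasurable]
  have hisnd : (∫ p : X × X, g p.2 ∂π) = ∫ x, g x ∂μv := by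
    rw [← hπ2, integral_map measurable_snd.aemeasurable hgmeas.aestronglyMeasurable]
  -- middle term
  have hmid : |(∫ x, g x ∂μv) - ∑ i, α i * ∫ x, g x ∂(μ i)|
      ≤ ∫ p : X × X, dist p.1 p.2 ∂π := by
    rw [← hifst, ← hisnd, ← integral_sub hgsnd hgfst]
    refine (abs_integral_le_integral_abs' _ _).trans ?_
    refine integral_mono (hgsnd.sub hgfst).abs hπint fun p => ?_
    have := hLip1 p.1 p.2
    have h3 : |g p.2 - g p.1| = |g p.1 - g p.2| := abs_sub_comm _ _
    simpa [h3] using this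
  -- first term
  have h1 : |(∫ x, L (fv x) (h x) ∂μv) - ∫ x, g x ∂μv|
      ≤ k * ∫ x, |fv x - hstar x| ∂μv := by
    rw [← integral_sub hint_v hg_v]
    refine (abs_integral_le_integral_abs' _ _).trans ?_
    rw [← integral_const_mul]
    exact integral_mono (hint_v.sub hg_v).abs (hint_dv.const_mul k) hbv
  -- per-client term
  have h3 : ∀ i, |(∫ x, L (ft i x) (h x) ∂(μ i)) - ∫ x, g x ∂(μ i)|
      ≤ k * ∫ x, |ft i x - hstar x| ∂(μ i) := by
    intro i
    rw [← integral_sub (hint_t i) (hg_t i)]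
    refine (abs_integral_le_integral_abs' _ _).trans ?_
    rw [← integral_const_mul]
    exact integral_mono ((hint_t i).sub (hg_t i)).abs ((hint_dt i).const_mul k) (hbt i)
  have hlast : |(∑ i, α i * ∫ x, g x ∂(μ i)) - ∑ i, α i * ∫ x, L (ft i x) (h x) ∂(μ i)|
      ≤ k * ∑ i, α i * ∫ x, |ft i x - hstar x| ∂(μ i) := by
    rw [← Finset.sum_sub_distrib]
    refine (Finset.abs_sum_le_sum_abs _ _).trans ?_
    rw [Finset.mul_sum]
    refine Finset.sum_le_sum fun i _ => ?_
    rw [← mul_sub, abs_mul, abs_of_nonneg (hα i)]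
    calc α i * |(∫ x, g x ∂(μ i)) - ∫ x, L (ft i x) (h x) ∂(μ i)|
        ≤ α i * (k * ∫ x, |ft i x - hstar x| ∂(μ i)) := by
          refine mul_le_mul_of_nonneg_left ?_ (hα i)
          rw [abs_sub_comm]
          exact h3 i
      _ = k * (α i * ∫ x, |ft i x - hstar x| ∂(μ i)) := by ring
  -- assemble
  set A := ∫ x, L (fv x) (h x) ∂μv
  set Gv := ∫ x, g x ∂μv
  set SG := ∑ i, α i * ∫ x, g x ∂(μ i)
  set SB := ∑ i, α i * ∫ x, L (ft i x) (h x) ∂(μ i)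
  have tri1 : |A - SB| ≤ |A - Gv| + |Gv - SG| + |SG - SB| := by
    calc |A - SB| ≤ |A - SG| + |SG - SB| := abs_sub_le _ _ _
      _ ≤ (|A - Gv| + |Gv - SG|) + |SG - SB| := by
          exact add_le_add_left (abs_sub_le _ _ _) _
  have : |A - SB| ≤ (∫ p : X × X, dist p.1 p.2 ∂π)
      + (k * ∫ x, |fv x - hstar x| ∂μv
        + k * ∑ i, α i * ∫ x, |ft i x - hstar x| ∂(μ i)) := by
    refine tri1.trans ?_
    have := hmid
    linarith [h1, hmid, hlast]
  calc |A - SB| ≤ _ := this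
    _ = (∫ p : X × X, dist p.1 p.2 ∂π)
        + k * ((∫ x, |fv x - hstar x| ∂μv)
            + ∑ i, α i * ∫ x, |ft i x - hstar x| ∂(μ i)) := by ring
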